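/- Let X be a reflexive Banach space such that both X and its dual X* are strictly convex, let A ⊂ X be nonempty, and let f : X → ℝ be Lipschitz continuous on a neighborhood of A. Then there is a unique ã ∈ ∂f(A) with ‖ã‖ = min_{a ∈ ∂f(A)} ‖a‖. Moreover, if 0 ∉ ∂f(A), then there exists a unique optimal descent direction h̃ of f on A, and it is characterized among unit vectors by ⟨ã, h̃⟩ = −‖ã‖. -/

import Mathlib

open Filter Metric Set NormedSpace
open scoped NNReal Topology

variable {X : Type*} [NormedAddCommGroup X] [NormedSpace ℝ X]

/-- Clarke's generalized directional derivative
`f⁰(x;h) = limsup_{y→x, t↓0⁺} (f(y+th) − f(y))/t`. -/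
noncomputable def clarkeDeriv (f : X → ℝ) (x : X) (h : X) : ℝ :=
  Filter.limsup (fun p : X × ℝ => (f (p.1 + p.2 • h) - f p.1) / p.2)
    ((nhds x) ×ˢ (nhdsWithin 0 (Set.Ioi 0)))

/-- Clarke's generalized gradient `∂f(x) = {a ∈ X* : ⟨a,h⟩ ≤ f⁰(x;h) ∀ h}`. -/
def clarkeGrad (f : X → ℝ) (x : X) : Set (StrongDual ℝ X) :=
  {a | ∀ h : X, a h ≤ clarkeDeriv f x h}

/-- Directional derivative of `f` on the set `A`: `f⁰(A;h) = sup_{y∈A} f⁰(y;h)`. -/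
noncomputable def setDeriv (f : X → ℝ) (A : Set X) (h : X) : ℝ :=
  sSup ((fun y => clarkeDeriv f y h) '' A)

/-- Gradient of `f` on the set `A`: the weak*-closed convex hull of `⋃_{y∈A} ∂f(y)`. -/
def setGrad (f : X → ℝ) (A : Set X) : Set (StrongDual ℝ X) :=
  {a | StrongDual.toWeakDual a ∈
    closure ((StrongDual.toWeakDual (𝕜 := ℝ) (E := X)) '' (convexHull ℝ (⋃ y ∈ A, clarkeGrad f y)))}

/-- `h` is an optimal (steepest) descent direction of `f` on `A`. -/
noncomputable def IsOptimalDescent (f : X → ℝ) (A : Set X) (h : X) : Prop :=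
  ‖h‖ = 1 ∧ (∀ h' : X, ‖h'‖ ≤ 1 → setDeriv f A h ≤ setDeriv f A h') ∧ setDeriv f A h < 0

section basic

variable {f : X → ℝ} {L : ℝ≥0} {U : Set X} {x : X}

lemma cd_ev_bound (hU : IsOpen U) (hf : LipschitzOnWith L f U) (hx : x ∈ U) (h : X) :
    ∀ᶠ p : X × ℝ in 𝓝 x ×ˢ 𝓝[>] (0:ℝ),
      |(f (p.1 + p.2 • h) - f p.1) / p.2| ≤ L * ‖h‖ := by
  obtain ⟨ε, hε, hball⟩ := Metric.isOpen_iff.1 hU x hx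
  have h1 : (ball x (ε/2)) ∈ 𝓝 x := ball_mem_nhds x (by positivity)
  have h2 : (Ioo (0:ℝ) (ε/2/(‖h‖+1))) ∈ 𝓝[>] (0:ℝ) :=
    Ioo_mem_nhdsGT_of_mem ⟨le_rfl, by positivity⟩
  filter_upwards [Filter.prod_mem_prod h1 h2] with p hp
  obtain ⟨hy, ht0, ht1⟩ : p.1 ∈ ball x (ε/2) ∧ 0 < p.2 ∧ p.2 < ε/2/(‖h‖+1) :=
    ⟨hp.1, hp.2.1, hp.2.2⟩
  have hnorm : ‖p.2 • h‖ < ε/2 := by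
    rw [norm_smul, Real.norm_eq_abs, abs_of_pos ht0]
    calc p.2 * ‖h‖ ≤ p.2 * (‖h‖+1) := by nlinarith [norm_nonneg h]
      _ < ε/2/(‖h‖+1) * (‖h‖+1) := by
          have : (0:ℝ) < ‖h‖+1 := by positivity
          nlinarith
      _ = ε/2 := div_mul_cancel₀ _ (by positivity)
  have hyU : p.1 ∈ U := hball (by
    have := mem_ball.1 hy; exact mem_ball.2 (by linarith))
  have hyhU : p.1 + p.2 • h ∈ U := hball (by
    have h3 : dist (p.1 + p.2 • h) x ≤ dist (p.1 + p.2 • h) p.1 + dist p.1 x :=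
      dist_triangle _ _ _
    have h4 : dist (p.1 + p.2 • h) p.1 = ‖p.2 • h‖ := by
      rw [dist_eq_norm]; simp
    have := mem_ball.1 hy
    exact mem_ball.2 (by rw [h4] at h3; linarith))
  have hL : |f (p.1 + p.2 • h) - f p.1| ≤ L * (p.2 * ‖h‖) := by
    have := hf.dist_le_mul _ hyhU _ hyU
    rw [Real.dist_eq, dist_eq_norm] at this
    simpa [norm_smul, Real.norm_eq_abs, abs_of_pos ht0, mul_assoc] using this
  rw [abs_div, abs_of_pos ht0, div_le_iff₀ ht0]
  calc |f (p.1 + p.2 • h) - f p.1| ≤ L * (p.2 * ‖h‖) := hL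
    _ = L * ‖h‖ * p.2 := by ring

end basic

section calc2

variable {f : X → ℝ} {L : ℝ≥0} {U : Set X} {x : X}

/-- abbreviation for the difference quotient -/
private noncomputable def dq (f : X → ℝ) (h : X) (p : X × ℝ) : ℝ := (f (p.1 + p.2 • h) - f p.1) / p.2

lemma cd_bddAbove (hU : IsOpen U) (hf : LipschitzOnWith L f U) (hx : x ∈ U) (h : X) :
    IsBoundedUnder (· ≤ ·) (𝓝 x ×ˢ 𝓝[>] (0:ℝ)) (dq f h) :=
  ⟨L * ‖h‖, (cd_ev_bound hU hf hx h).mono fun _ hp => (abs_le.1 hp).2⟩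

lemma cd_bddBelow (hU : IsOpen U) (hf : LipschitzOnWith L f U) (hx : x ∈ U) (h : X) :
    IsBoundedUnder (· ≥ ·) (𝓝 x ×ˢ 𝓝[>] (0:ℝ)) (dq f h) :=
  ⟨-(L * ‖h‖), (cd_ev_bound hU hf hx h).mono fun _ hp => (abs_le.1 hp).1⟩

lemma clarkeDeriv_le_mul (hU : IsOpen U) (hf : LipschitzOnWith L f U) (hx : x ∈ U) (h : X) :
    clarkeDeriv f x h ≤ L * ‖h‖ :=
  limsup_le_of_le ((cd_bddBelow hU hf hx h).isCoboundedUnder_le)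
    ((cd_ev_bound hU hf hx h).mono fun _ hp => (abs_le.1 hp).2)

lemma neg_mul_le_clarkeDeriv (hU : IsOpen U) (hf : LipschitzOnWith L f U) (hx : x ∈ U) (h : X) :
    -(L * ‖h‖) ≤ clarkeDeriv f x h :=
  le_limsup_of_le (cd_bddAbove hU hf hx h) (fun b hb => by
    obtain ⟨p, h1, h2⟩ := (hb.and ((cd_ev_bound hU hf hx h).mono fun _ hp => (abs_le.1 hp).1)).exists
    exact le_trans h2 h1)

lemma clarkeDeriv_zero (f : X → ℝ) (x : X) : clarkeDeriv f x 0 = 0 := by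
  have : (fun p : X × ℝ => (f (p.1 + p.2 • (0:X)) - f p.1) / p.2) = fun _ => (0:ℝ) := by
    funext p; simp
  rw [clarkeDeriv, this, limsup_const]

private lemma limsup_comp {α β : Type*} (u : α → ℝ) (φ : β → α) (F : Filter β) :
    limsup (u ∘ φ) F = limsup u (map φ F) := by
  rw [Filter.limsup, Filter.limsup, Filter.map_map]

private lemma map_scale {c : ℝ} (hc : 0 < c) (x : X) :
    map (fun p : X × ℝ => (p.1, p.2 * c)) (𝓝 x ×ˢ 𝓝[>] (0:ℝ)) = 𝓝 x ×ˢ 𝓝[>] (0:ℝ) := by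
  have key : ∀ c' : ℝ, 0 < c' → Tendsto (fun t : ℝ => t * c') (𝓝[>] (0:ℝ)) (𝓝[>] (0:ℝ)) := by
    intro c' hc'
    rw [tendsto_nhdsWithin_iff]
    constructor
    · have := (continuous_mul_right c').tendsto (0:ℝ)
      rw [zero_mul] at this
      exact this.mono_left nhdsWithin_le_nhds
    · exact eventually_nhdsWithin_of_forall fun t ht => mul_pos ht hc'
  have h1 : ∀ c' : ℝ, 0 < c' → Tendsto (fun p : X × ℝ => (p.1, p.2 * c'))
      (𝓝 x ×ˢ 𝓝[>] (0:ℝ)) (𝓝 x ×ˢ 𝓝[>] (0:ℝ)) :=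
    fun c' hc' => Tendsto.prodMk tendsto_fst ((key c' hc').comp tendsto_snd)
  refine le_antisymm (h1 c hc) ?_
  have hcomp : (fun p : X × ℝ => (p.1, p.2 * c)) ∘ (fun p : X × ℝ => (p.1, p.2 * c⁻¹)) = id := by
    funext p; simp [mul_assoc, inv_mul_cancel₀ hc.ne']
  calc 𝓝 x ×ˢ 𝓝[>] (0:ℝ)
      = map ((fun p : X × ℝ => (p.1, p.2 * c)) ∘ fun p : X × ℝ => (p.1, p.2 * c⁻¹))
        (𝓝 x ×ˢ 𝓝[>] (0:ℝ)) := by rw [hcomp, map_id]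
    _ = map (fun p : X × ℝ => (p.1, p.2 * c))
        (map (fun p : X × ℝ => (p.1, p.2 * c⁻¹)) (𝓝 x ×ˢ 𝓝[>] (0:ℝ))) := (Filter.map_map).symm
    _ ≤ _ := map_mono (h1 c⁻¹ (inv_pos.2 hc))

end calc2

section calc3

variable {f : X → ℝ} {L : ℝ≥0} {U : Set X} {x : X}

lemma clarkeDeriv_eq_limsup_dq (f : X → ℝ) (x h : X) :
    clarkeDeriv f x h = limsup (dq f h) (𝓝 x ×ˢ 𝓝[>] (0:ℝ)) := rfl

lemma clarkeDeriv_smul (hU : IsOpen U) (hf : LipschitzOnWith L f U) (hx : x ∈ U)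
    (h : X) {c : ℝ} (hc : 0 < c) :
    clarkeDeriv f x (c • h) = c * clarkeDeriv f x h := by
  have hfun : dq f (c • h) = (fun p : X × ℝ => c * dq f h p) ∘ (fun p : X × ℝ => (p.1, p.2 * c)) := by
    funext p
    simp only [Function.comp, dq]
    rcases eq_or_ne p.2 0 with h0 | h0
    · simp [h0]
    · rw [smul_smul, mul_comm p.2 c, ← smul_smul, smul_smul, mul_comm c p.2]
      field_simp
  have hmono : Monotone (fun y : ℝ => c * y) := fun a b hab => mul_le_mul_of_nonneg_left hab hc.le
  have hcont : ContinuousAt (fun y : ℝ => c * y) (limsup (dq f h) (𝓝 x ×ˢ 𝓝[>] (0:ℝ))) :=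
    (continuous_const.mul continuous_id).continuousAt
  have hmap := hmono.map_limsup_of_continuousAt (F := 𝓝 x ×ˢ 𝓝[>] (0:ℝ)) (dq f h) hcont
    (cd_bddAbove hU hf hx h) ((cd_bddBelow hU hf hx h).isCoboundedUnder_le)
  rw [clarkeDeriv_eq_limsup_dq, clarkeDeriv_eq_limsup_dq, hfun, _root_.limsup_comp,
    map_scale hc]
  rw [show (fun p : X × ℝ => c * dq f h p) = (fun y => c * y) ∘ dq f h from rfl, ← hmap]

lemma clarkeDeriv_add_le (hU : IsOpen U) (hf : LipschitzOnWith L f U) (hx : x ∈ U) (h k : X) :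
    clarkeDeriv f x (h + k) ≤ clarkeDeriv f x h + clarkeDeriv f x k := by
  set F := 𝓝 x ×ˢ 𝓝[>] (0:ℝ) with hF
  set ψ : X × ℝ → X × ℝ := fun p => (p.1 + p.2 • k, p.2) with hψdef
  have hψ : Tendsto ψ F F := by
    refine Tendsto.prodMk ?_ tendsto_snd
    rw [hF]
    have h2 : Tendsto (fun p : X × ℝ => p.2) (𝓝 x ×ˢ 𝓝[>] (0:ℝ)) (𝓝 (0:ℝ)) :=
      tendsto_snd.mono_right nhdsWithin_le_nhds
    have : Tendsto (fun p : X × ℝ => p.1 + p.2 • k) (𝓝 x ×ˢ 𝓝[>] (0:ℝ)) (𝓝 (x + (0:ℝ) • k)) :=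
      Tendsto.add tendsto_fst (h2.smul_const k)
    simpa using this
  have hsplit : dq f (h + k) = (fun p => dq f h (ψ p) + dq f k p) := by
    funext p
    simp only [dq, hψdef]
    rw [← add_div]
    congr 1
    have : p.1 + p.2 • (h + k) = p.1 + p.2 • k + p.2 • h := by
      rw [smul_add]; abel
    rw [this]
    ring
  have hb1le : IsBoundedUnder (· ≤ ·) F (fun p => dq f h (ψ p)) :=
    ⟨(L : ℝ) * ‖h‖, (hψ.eventually (cd_ev_bound hU hf hx h)).mono fun _ hp => (abs_le.1 hp).2⟩
  have hb1ge : IsBoundedUnder (· ≥ ·) F (fun p => dq f h (ψ p)) :=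
    ⟨-((L : ℝ) * ‖h‖), (hψ.eventually (cd_ev_bound hU hf hx h)).mono fun _ hp => (abs_le.1 hp).1⟩
  have hadd : limsup (fun p => dq f h (ψ p) + dq f k p) F ≤
      limsup (fun p => dq f h (ψ p)) F + limsup (dq f k) F := by
    have := limsup_add_le (f := F) (u := fun p => dq f h (ψ p)) (v := dq f k)
      hb1ge hb1le ((cd_bddBelow hU hf hx k).isCoboundedUnder_le) (cd_bddAbove hU hf hx k)
    exact le_trans (le_of_eq (by rfl)) this
  have hcomp : limsup (fun p => dq f h (ψ p)) F ≤ limsup (dq f h) F := by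
    have h1 : limsup (fun p => dq f h (ψ p)) F = limsup (dq f h) (map ψ F) :=
      _root_.limsup_comp (dq f h) ψ F
    rw [h1]
    exact limsup_le_limsup_of_le hψ
      (by rw [Filter.IsCoboundedUnder, Filter.map_map]
          exact (hb1ge).isCoboundedUnder_le)
      (cd_bddAbove hU hf hx h)
  calc clarkeDeriv f x (h + k) = limsup (dq f (h+k)) F := clarkeDeriv_eq_limsup_dq f x (h+k)
    _ ≤ limsup (dq f h) F + limsup (dq f k) F := by
        rw [hsplit]; exact le_trans hadd (add_le_add hcomp le_rfl)
    _ = _ := rfl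

end calc3

section hb

variable {f : X → ℝ} {L : ℝ≥0} {U : Set X} {x : X}

lemma exists_mem_clarkeGrad (hU : IsOpen U) (hf : LipschitzOnWith L f U) (hx : x ∈ U) (h₀ : X) :
    ∃ a : StrongDual ℝ X, a ∈ clarkeGrad f x ∧ a h₀ = clarkeDeriv f x h₀ := by
  have N_hom : ∀ c : ℝ, 0 < c → ∀ h : X, clarkeDeriv f x (c • h) = c * clarkeDeriv f x h :=
    fun c hc h => clarkeDeriv_smul hU hf hx h hc
  have N_add : ∀ h k : X, clarkeDeriv f x (h + k) ≤ clarkeDeriv f x h + clarkeDeriv f x k :=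
    fun h k => clarkeDeriv_add_le hU hf hx h k
  have N_neg : ∀ h : X, -clarkeDeriv f x (-h) ≤ clarkeDeriv f x h := by
    intro h
    have := N_add h (-h)
    rw [add_neg_cancel, clarkeDeriv_zero] at this
    linarith
  have mkCont : ∀ g : X →ₗ[ℝ] ℝ, (∀ h, g h ≤ clarkeDeriv f x h) →
      ∃ a : StrongDual ℝ X, (∀ h, a h = g h) ∧ a ∈ clarkeGrad f x := by
    intro g hg
    have hbound : ∀ h : X, ‖g h‖ ≤ (L : ℝ) * ‖h‖ := by
      intro h
      rw [Real.norm_eq_abs, abs_le]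
      constructor
      · have h1 := (hg (-h)).trans (clarkeDeriv_le_mul hU hf hx (-h))
        rw [map_neg, norm_neg] at h1
        linarith
      · exact (hg h).trans (clarkeDeriv_le_mul hU hf hx h)
    refine ⟨LinearMap.mkContinuous g L hbound, fun h => rfl, fun h => ?_⟩
    exact (hg h)
  rcases eq_or_ne h₀ 0 with rfl | hne
  · obtain ⟨g, hg1, hg2⟩ := exists_extension_of_le_sublinear
      ⟨⊥, 0⟩ (clarkeDeriv f x) N_hom N_add (fun p => by
        have hp := p.2
        rw [Submodule.mem_bot] at hp
        simp [hp, clarkeDeriv_zero])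
    obtain ⟨a, ha1, ha2⟩ := mkCont g hg2
    exact ⟨a, ha2, by rw [ha1, map_zero, clarkeDeriv_zero]⟩
  · obtain ⟨g, hg1, hg2⟩ := exists_extension_of_le_sublinear
      (LinearPMap.mkSpanSingleton h₀ (clarkeDeriv f x h₀) hne) (clarkeDeriv f x) N_hom N_add
      (fun p => by
        obtain ⟨v, hv⟩ := p
        obtain ⟨c, rfl⟩ := Submodule.mem_span_singleton.1 hv
        rw [LinearPMap.mkSpanSingleton'_apply]
        rcases lt_trichotomy c 0 with hc | rfl | hc
        · have h1 : clarkeDeriv f x (c • h₀) = (-c) * clarkeDeriv f x (-h₀) := by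
            rw [show c • h₀ = (-c) • (-h₀) by simp, N_hom (-c) (by linarith)]
          rw [h1, smul_eq_mul, RingHom.id_apply]
          have h2 := N_neg h₀
          nlinarith
        · simp [clarkeDeriv_zero]
        · rw [N_hom c hc, smul_eq_mul, RingHom.id_apply])
    obtain ⟨a, ha1, ha2⟩ := mkCont g hg2
    refine ⟨a, ha2, ?_⟩
    have hmem : h₀ ∈ Submodule.span ℝ {h₀} := Submodule.mem_span_singleton_self h₀
    have := hg1 ⟨h₀, hmem⟩
    rw [ha1]
    simp only [LinearPMap.mkSpanSingleton] at this
    rw [this]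
    exact LinearPMap.mkSpanSingleton'_apply_self _ _ _ _

lemma norm_le_of_mem_clarkeGrad (hU : IsOpen U) (hf : LipschitzOnWith L f U) (hx : x ∈ U)
    {a : StrongDual ℝ X} (ha : a ∈ clarkeGrad f x) : ‖a‖ ≤ L :=
  ContinuousLinearMap.opNorm_le_bound a L.coe_nonneg fun h => by
    rw [Real.norm_eq_abs, abs_le]
    constructor
    · have h1 := (ha (-h)).trans (clarkeDeriv_le_mul hU hf hx (-h))
      rw [map_neg, norm_neg] at h1
      linarith
    · exact (ha h).trans (clarkeDeriv_le_mul hU hf hx h)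

end hb

section weakstar

variable {f : X → ℝ} {L : ℝ≥0} {U : Set X} {A : Set X}

/-- The weak-star closed convex hull, as a subset of the weak dual. -/
def Kset (f : X → ℝ) (A : Set X) : Set (WeakDual ℝ X) :=
  closure ((StrongDual.toWeakDual (𝕜 := ℝ) (E := X)) '' (convexHull ℝ (⋃ y ∈ A, clarkeGrad f y)))

lemma mem_setGrad_iff {a : StrongDual ℝ X} : a ∈ setGrad f A ↔ StrongDual.toWeakDual a ∈ Kset f A := Iff.rfl

lemma mem_setGrad_of_clarkeGrad {y : X} (hy : y ∈ A) {a : StrongDual ℝ X} (ha : a ∈ clarkeGrad f y) :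
    a ∈ setGrad f A :=
  subset_closure (X := WeakDual ℝ X) (mem_image_of_mem _ (subset_convexHull ℝ _ (mem_biUnion hy ha)))

lemma convex_eval_le (h : X) (c : ℝ) : Convex ℝ {a : StrongDual ℝ X | a h ≤ c} := by
  intro a ha b hb s t hs ht hst
  simp only [mem_setOf_eq] at *
  have hev : (s • a + t • b) h = s * a h + t * b h := by simp
  rw [hev]
  have h1 : s * a h ≤ s * c := mul_le_mul_of_nonneg_left ha hs
  have h2 : t * b h ≤ t * c := mul_le_mul_of_nonneg_left hb ht
  have h3 : s * c + t * c = c := by rw [← add_mul, hst, one_mul]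
  linarith

lemma setGrad_norm_le (hU : IsOpen U) (hf : LipschitzOnWith L f U) (hAU : A ⊆ U)
    {a : StrongDual ℝ X} (ha : a ∈ setGrad f A) : ‖a‖ ≤ L := by
  have hS : (⋃ y ∈ A, clarkeGrad f y) ⊆ closedBall (0 : StrongDual ℝ X) L := by
    intro b hb
    obtain ⟨y, hy, hby⟩ := mem_iUnion₂.1 hb
    rw [mem_closedBall_zero_iff]
    exact norm_le_of_mem_clarkeGrad hU hf (hAU hy) hby
  have hhull : convexHull ℝ (⋃ y ∈ A, clarkeGrad f y) ⊆ closedBall (0 : StrongDual ℝ X) L :=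
    convexHull_min hS (convex_closedBall _ _)
  have himg : (StrongDual.toWeakDual (𝕜 := ℝ) (E := X)) '' (convexHull ℝ (⋃ y ∈ A, clarkeGrad f y)) ⊆
      WeakDual.toStrongDual ⁻¹' closedBall (0 : StrongDual ℝ X) L := by
    rintro _ ⟨b, hb, rfl⟩
    exact hhull hb
  have := closure_minimal himg (WeakDual.isClosed_closedBall (0 : StrongDual ℝ X) L)
  have := this ha
  exact mem_closedBall_zero_iff.1 this

lemma isCompact_Kset (hU : IsOpen U) (hf : LipschitzOnWith L f U) (hAU : A ⊆ U) :
    IsCompact (Kset f A) := by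
  refine (WeakDual.isCompact_closedBall (0 : StrongDual ℝ X) L).of_isClosed_subset isClosed_closure ?_
  intro b hb
  rw [mem_preimage, mem_closedBall_zero_iff]
  exact setGrad_norm_le hU hf hAU (a := WeakDual.toStrongDual b) hb

lemma setGrad_convex {a b : StrongDual ℝ X} (ha : a ∈ setGrad f A) (hb : b ∈ setGrad f A)
    {s t : ℝ} (hs : 0 ≤ s) (ht : 0 ≤ t) (hst : s + t = 1) : s • a + t • b ∈ setGrad f A := by
  have hconv : Convex ℝ (Kset f A) :=
    (((convex_convexHull ℝ _).linear_image (StrongDual.toWeakDual (𝕜 := ℝ) (E := X)).toLinearMap)).closure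
  have := hconv ha hb hs ht hst
  rw [mem_setGrad_iff, map_add, map_smul, map_smul]
  exact this

lemma setDeriv_bddAbove (hU : IsOpen U) (hf : LipschitzOnWith L f U) (hAU : A ⊆ U) (h : X) :
    BddAbove ((fun y => clarkeDeriv f y h) '' A) :=
  ⟨L * ‖h‖, by rintro _ ⟨y, hy, rfl⟩; exact clarkeDeriv_le_mul hU hf (hAU hy) h⟩

lemma eval_le_setDeriv (hU : IsOpen U) (hf : LipschitzOnWith L f U) (hAU : A ⊆ U)
    (hA : A.Nonempty) {a : StrongDual ℝ X} (ha : a ∈ setGrad f A) (h : X) :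
    a h ≤ setDeriv f A h := by
  set σ := setDeriv f A h with hσ
  have hC : IsClosed {b : WeakDual ℝ X | b h ≤ σ} :=
    isClosed_Iic.preimage (WeakDual.eval_continuous h)
  have hsub : (StrongDual.toWeakDual (𝕜 := ℝ) (E := X)) '' (convexHull ℝ (⋃ y ∈ A, clarkeGrad f y)) ⊆
      {b : WeakDual ℝ X | b h ≤ σ} := by
    rintro _ ⟨b, hb, rfl⟩
    have : b ∈ {a : StrongDual ℝ X | a h ≤ σ} := by
      refine convexHull_min ?_ (convex_eval_le h σ) hb
      intro c hc
      obtain ⟨y, hy, hcy⟩ := mem_iUnion₂.1 hc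
      have h1 : c h ≤ clarkeDeriv f y h := hcy h
      have h2 : clarkeDeriv f y h ≤ σ :=
        le_csSup (setDeriv_bddAbove hU hf hAU h) (mem_image_of_mem _ hy)
      exact h1.trans h2
    exact this
  exact closure_minimal hsub hC ha

lemma exists_max_eval (hU : IsOpen U) (hf : LipschitzOnWith L f U) (hAU : A ⊆ U)
    (hA : A.Nonempty) (h : X) :
    ∃ a : StrongDual ℝ X, a ∈ setGrad f A ∧ a h = setDeriv f A h ∧
      ∀ b ∈ setGrad f A, b h ≤ a h := by
  have hKne : (Kset f A).Nonempty := by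
    obtain ⟨y, hy⟩ := hA
    obtain ⟨a, ha, -⟩ := exists_mem_clarkeGrad hU hf (hAU hy) 0
    exact ⟨StrongDual.toWeakDual a, mem_setGrad_of_clarkeGrad hy ha⟩
  obtain ⟨b₀, hb₀K, hb₀max⟩ := (isCompact_Kset hU hf hAU).exists_isMaxOn hKne
    ((WeakDual.eval_continuous h).continuousOn)
  refine ⟨WeakDual.toStrongDual b₀, hb₀K, le_antisymm ?_ ?_, fun b hb => hb₀max hb⟩
  · exact eval_le_setDeriv hU hf hAU hA hb₀K h
  · refine csSup_le (hA.image _) ?_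
    rintro _ ⟨y, hy, rfl⟩
    obtain ⟨a, ha, hah⟩ := exists_mem_clarkeGrad hU hf (hAU hy) h
    show clarkeDeriv f y h ≤ _
    rw [← hah]
    exact hb₀max (mem_setGrad_of_clarkeGrad hy ha)

end weakstar

section cluster

lemma mapClusterPt_mem_closed {ι β : Type*} [TopologicalSpace β] {F : Filter ι} {v : ι → β} {b : β}
    (hb : MapClusterPt b F v) {s : Set β} (hs : IsClosed s) (h : ∀ᶠ i in F, v i ∈ s) : b ∈ s := by
  have h1 : map v F ≤ 𝓟 s := le_principal_iff.2 (mem_map.2 (h.mono fun i hi => hi))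
  have h2 : ClusterPt b (𝓟 s) := hb.clusterPt.mono h1
  rw [← hs.closure_eq]
  exact mem_closure_iff_clusterPt.2 h2

lemma mapClusterPt_eq_of_tendsto {ι β : Type*} [TopologicalSpace β] [T2Space β] {F : Filter ι}
    {v : ι → β} {b c : β} (hb : MapClusterPt b F v) (hc : Tendsto v F (𝓝 c)) : b = c :=
  eq_of_nhds_neBot (hb.clusterPt.mono hc)

end cluster

section norming

variable {f : X → ℝ} {L : ℝ≥0} {U : Set X} {A : Set X}

lemma exists_norming (hrefl : Function.Surjective (inclusionInDoubleDual ℝ X))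
    {g : StrongDual ℝ X} (hg : g ≠ 0) : ∃ u : X, ‖u‖ = 1 ∧ g u = ‖g‖ := by
  obtain ⟨Φ, hΦ1, hΦ2⟩ := exists_dual_vector ℝ g (norm_ne_zero_iff.2 hg)
  obtain ⟨u, rfl⟩ := hrefl Φ
  refine ⟨u, ?_, ?_⟩
  · rw [← hΦ1]
    exact ((inclusionInDoubleDualLi ℝ (E := X)).norm_map u).symm
  · have h2 := hΦ2
    rw [show ((inclusionInDoubleDual ℝ X) u) g = g u from rfl] at h2
    exact_mod_cast h2

lemma attain_unique [StrictConvexSpace ℝ X] {g : StrongDual ℝ X} (hg : g ≠ 0) {u v : X}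
    (hu : ‖u‖ = 1) (hv : ‖v‖ = 1) (hgu : g u = ‖g‖) (hgv : g v = ‖g‖) : u = v := by
  by_contra hne
  have hgpos : 0 < ‖g‖ := norm_pos_iff.2 hg
  have h2 : ‖(1/2 : ℝ) • (u + v)‖ < 1 := by
    have := (norm_midpoint_lt_iff (E := X) (hu.trans hv.symm)).2 hne
    rwa [hu] at this
  have h2' : ‖u + v‖ < 2 := by
    rw [norm_smul] at h2
    simp only [one_div, norm_inv, Real.norm_ofNat] at h2
    linarith
  have h3 : g (u + v) = 2 * ‖g‖ := by rw [map_add, hgu, hgv]; ring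
  have h4 : g (u + v) ≤ ‖g‖ * ‖u + v‖ :=
    (le_abs_self _).trans ((Real.norm_eq_abs _) ▸ g.le_opNorm (u + v))
  nlinarith

set_option maxHeartbeats 1000000 in
lemma eval_norming_ge [StrictConvexSpace ℝ X]
    (hrefl : Function.Surjective (inclusionInDoubleDual ℝ X))
    (hU : IsOpen U) (hf : LipschitzOnWith L f U) (hAU : A ⊆ U)
    {at' : StrongDual ℝ X} (hat : at' ∈ setGrad f A) (hmin : ∀ b ∈ setGrad f A, ‖at'‖ ≤ ‖b‖)
    (hat0 : at' ≠ 0) {u : X} (hu : ‖u‖ = 1) (hau : at' u = ‖at'‖)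
    {a : StrongDual ℝ X} (ha : a ∈ setGrad f A) : ‖at'‖ ≤ a u := by
  set m := ‖at'‖ with hmdef
  have hm : 0 < m := norm_pos_iff.2 hat0
  set c : ℝ → StrongDual ℝ X := fun t => (1 - t) • at' + t • a with hcdef
  have hcmem : ∀ t ∈ Icc (0:ℝ) 1, c t ∈ setGrad f A := fun t ht =>
    setGrad_convex hat ha (by linarith [ht.2]) ht.1 (by ring)
  have hcm : ∀ t ∈ Icc (0:ℝ) 1, m ≤ ‖c t‖ := fun t ht => hmin _ (hcmem t ht)
  have hcne : ∀ t ∈ Icc (0:ℝ) 1, c t ≠ 0 := by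
    intro t ht h0
    have := hcm t ht
    rw [h0, norm_zero] at this
    linarith
  have hΦex : ∀ t : ℝ, ∃ Φ : StrongDual ℝ (StrongDual ℝ X),
      t ∈ Icc (0:ℝ) 1 → ‖Φ‖ = 1 ∧ Φ (c t) = ‖c t‖ := by
    intro t
    by_cases ht : t ∈ Icc (0:ℝ) 1
    · obtain ⟨Φ, h1, h2⟩ := exists_dual_vector ℝ (c t) (norm_ne_zero_iff.2 (hcne t ht))
      exact ⟨Φ, fun _ => ⟨h1, h2⟩⟩
    · exact ⟨0, fun h' => absurd h' ht⟩
  choose Φ hΦ using hΦex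
  set G := 𝓝[Ioc (0:ℝ) 1] (0:ℝ) with hGdef
  haveI hGne : (𝓝[Ioc (0:ℝ) 1] (0:ℝ)).NeBot := by
    apply mem_closure_iff_nhdsWithin_neBot.1
    rw [closure_Ioc (one_ne_zero' ℝ).symm]
    exact ⟨le_rfl, zero_le_one⟩
  have hev : ∀ᶠ t in G, t ∈ Ioc (0:ℝ) 1 := self_mem_nhdsWithin
  have hIcc : ∀ t : ℝ, t ∈ Ioc (0:ℝ) 1 → t ∈ Icc (0:ℝ) 1 := fun t ht => ⟨ht.1.le, ht.2⟩
  set v : ℝ → WeakDual ℝ (StrongDual ℝ X) := fun t => StrongDual.toWeakDual (Φ t) with hvdef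
  have hB : IsCompact (WeakDual.toStrongDual ⁻¹'
      closedBall (0 : StrongDual ℝ (StrongDual ℝ X)) 1) := WeakDual.isCompact_closedBall _ _
  have hmapv : map v G ≤ 𝓟 (WeakDual.toStrongDual ⁻¹' closedBall (0 : StrongDual ℝ (StrongDual ℝ X)) 1) := by
    rw [le_principal_iff, mem_map]
    filter_upwards [hev] with t ht
    have := (hΦ t (hIcc t ht)).1
    simp only [mem_preimage, mem_closedBall_zero_iff]
    exact (mem_closedBall_zero_iff (E := StrongDual ℝ (StrongDual ℝ X))).2 this.le
  obtain ⟨Ψ, hΨB, hΨcl⟩ := hB.exists_mapClusterPt (f := G) (u := v) hmapv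
  -- evaluation facts
  have heval : ∀ (g : StrongDual ℝ X) (t : ℝ), v t g = Φ t g := fun _ _ => rfl
  have hϕat_ub : ∀ t ∈ Ioc (0:ℝ) 1, Φ t at' ≤ m := by
    intro t ht
    have h1 : |Φ t at'| ≤ ‖Φ t‖ * ‖at'‖ := (Real.norm_eq_abs _) ▸ (Φ t).le_opNorm at'
    rw [(hΦ t (hIcc t ht)).1, one_mul] at h1
    exact (le_abs_self _).trans h1
  have hct : ∀ t : ℝ, c t = at' + t • (a - at') := by
    intro t
    rw [hcdef]
    simp only [smul_sub, sub_smul, one_smul]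
    module
  have hϕat_lb : ∀ t ∈ Ioc (0:ℝ) 1, m - t * ‖a - at'‖ ≤ Φ t at' := by
    intro t ht
    have h1 : Φ t (c t) = Φ t at' + t * Φ t (a - at') := by
      rw [hct t, map_add, map_smul, smul_eq_mul]
    have h2 : ‖c t‖ = Φ t at' + t * Φ t (a - at') := by rw [← (hΦ t (hIcc t ht)).2, h1]
    have h3 : Φ t (a - at') ≤ ‖a - at'‖ := by
      have := (le_abs_self _).trans ((Real.norm_eq_abs _) ▸ (Φ t).le_opNorm (a - at'))
      rw [(hΦ t (hIcc t ht)).1, one_mul] at this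
      exact this
    have h4 : m ≤ ‖c t‖ := hcm t (hIcc t ht)
    nlinarith [ht.1]
  have htend : Tendsto (fun t => Φ t at') G (𝓝 m) := by
    have hlow : Tendsto (fun t : ℝ => m - t * ‖a - at'‖) G (𝓝 m) := by
      have : Tendsto (fun t : ℝ => m - t * ‖a - at'‖) (𝓝 0) (𝓝 (m - 0 * ‖a - at'‖)) := by
        exact (tendsto_const_nhds.sub ((continuous_id.mul continuous_const).tendsto 0))
      simp only [zero_mul, sub_zero] at this
      exact this.mono_left nhdsWithin_le_nhds
    refine tendsto_of_tendsto_of_tendsto_of_le_of_le' hlow tendsto_const_nhds ?_ ?_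
    · filter_upwards [hev] with t ht; exact hϕat_lb t ht
    · filter_upwards [hev] with t ht; exact hϕat_ub t ht
  have hΨat : Ψ at' = m := by
    have hcont : ContinuousAt (fun b : WeakDual ℝ (StrongDual ℝ X) => b at') Ψ :=
      (WeakDual.eval_continuous at').continuousAt
    exact mapClusterPt_eq_of_tendsto
      (MapClusterPt.continuousAt_comp (f := fun b : WeakDual ℝ (StrongDual ℝ X) => b at') hcont hΨcl)
      htend
  have hϕa : ∀ᶠ t in G, m ≤ Φ t a := by
    filter_upwards [hev] with t ht
    have h1 : Φ t (c t) = (1 - t) * Φ t at' + t * Φ t a := by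
      rw [hcdef]
      simp only [map_add, map_smul, smul_eq_mul]
    have h2 : m ≤ (1 - t) * Φ t at' + t * Φ t a := by
      rw [← h1, (hΦ t (hIcc t ht)).2]
      exact hcm t (hIcc t ht)
    have h3 := hϕat_ub t ht
    have ht0 : 0 < t := ht.1
    have ht1 : t ≤ 1 := ht.2
    nlinarith
  have hΨa : m ≤ Ψ a := by
    have hcont : ContinuousAt (fun b : WeakDual ℝ (StrongDual ℝ X) => b a) Ψ :=
      (WeakDual.eval_continuous a).continuousAt
    have hcl := MapClusterPt.continuousAt_comp (f := fun b : WeakDual ℝ (StrongDual ℝ X) => b a)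
      hcont hΨcl
    have := mapClusterPt_mem_closed hcl (isClosed_Ici (a := m)) (by
      filter_upwards [hϕa] with t ht; exact ht)
    exact this
  -- identify Ψ with J w
  obtain ⟨w, hw⟩ := hrefl (WeakDual.toStrongDual Ψ)
  have hwnorm_le : ‖w‖ ≤ 1 := by
    have h1 : ‖WeakDual.toStrongDual Ψ‖ ≤ 1 := by
      have := hΨB
      exact (mem_closedBall_zero_iff (E := StrongDual ℝ (StrongDual ℝ X))).1 this
    rw [← hw] at h1
    have h2 : ‖w‖ = ‖inclusionInDoubleDual ℝ X w‖ :=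
      ((inclusionInDoubleDualLi ℝ (E := X)).norm_map w).symm
    rw [h2]
    exact h1
  have hatw : at' w = m := by
    have : (inclusionInDoubleDual ℝ X w) at' = at' w := rfl
    rw [hw] at this
    rw [← this]
    exact hΨat
  have hwnorm : ‖w‖ = 1 := by
    refine le_antisymm hwnorm_le ?_
    by_contra hlt
    push_neg at hlt
    have h1 : at' w ≤ ‖at'‖ * ‖w‖ :=
      (le_abs_self _).trans ((Real.norm_eq_abs _) ▸ at'.le_opNorm w)
    rw [hatw] at h1
    nlinarith
  have hweq : w = u := attain_unique hat0 hwnorm hu hatw hau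
  have haw : a w = Ψ a := by
    have : (inclusionInDoubleDual ℝ X w) a = a w := rfl
    rw [hw] at this
    exact this.symm
  rw [← hweq]
  rw [haw]
  exact hΨa

end norming

section minexist

variable {f : X → ℝ} {L : ℝ≥0} {U : Set X} {A : Set X}

lemma setGrad_nonempty (hU : IsOpen U) (hf : LipschitzOnWith L f U) (hAU : A ⊆ U)
    (hA : A.Nonempty) : ∃ a : StrongDual ℝ X, a ∈ setGrad f A := by
  obtain ⟨y, hy⟩ := hA
  obtain ⟨a, ha, -⟩ := exists_mem_clarkeGrad hU hf (hAU hy) 0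
  exact ⟨a, mem_setGrad_of_clarkeGrad hy ha⟩

lemma exists_min_norm (hU : IsOpen U) (hf : LipschitzOnWith L f U) (hAU : A ⊆ U)
    (hA : A.Nonempty) :
    ∃ a : StrongDual ℝ X, a ∈ setGrad f A ∧ ∀ b ∈ setGrad f A, ‖a‖ ≤ ‖b‖ := by
  have hKc := isCompact_Kset (f := f) hU hf hAU
  obtain ⟨a₀, ha₀⟩ := setGrad_nonempty hU hf hAU hA
  haveI : Nonempty (Kset f A) := ⟨⟨StrongDual.toWeakDual a₀, ha₀⟩⟩
  set C : Kset f A → Set (WeakDual ℝ X) := fun b =>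
    Kset f A ∩ (WeakDual.toStrongDual ⁻¹'
      closedBall 0 ‖WeakDual.toStrongDual (b : WeakDual ℝ X)‖) with hCdef
  have hCne : ∀ b, (C b).Nonempty := fun b =>
    ⟨b, b.2, by rw [mem_preimage, mem_closedBall_zero_iff]⟩
  have hKcl : IsClosed (Kset f A) := isClosed_closure
  have hCcl : ∀ b, IsClosed (C b) := fun b =>
    hKcl.inter (WeakDual.isClosed_closedBall _ _)
  have hCcp : ∀ b, IsCompact (C b) := fun b =>
    hKc.of_isClosed_subset (hCcl b) inter_subset_left
  have hdir : Directed (· ⊇ ·) C := by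
    intro b₁ b₂
    rcases le_total ‖WeakDual.toStrongDual (b₁ : WeakDual ℝ X)‖
      ‖WeakDual.toStrongDual (b₂ : WeakDual ℝ X)‖ with hle | hle
    · exact ⟨b₁, subset_rfl, inter_subset_inter_right _
        (preimage_mono (closedBall_subset_closedBall hle))⟩
    · exact ⟨b₂, inter_subset_inter_right _
        (preimage_mono (closedBall_subset_closedBall hle)), subset_rfl⟩
  obtain ⟨b₀, hb₀⟩ :=
    IsCompact.nonempty_iInter_of_directed_nonempty_isCompact_isClosed C hdir hCne hCcp hCcl
  refine ⟨WeakDual.toStrongDual b₀, ?_, ?_⟩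
  · exact ((mem_iInter.1 hb₀ ⟨StrongDual.toWeakDual a₀, ha₀⟩).1)
  · intro b hb
    have := (mem_iInter.1 hb₀ ⟨StrongDual.toWeakDual b, hb⟩).2
    rwa [mem_preimage, mem_closedBall_zero_iff] at this

lemma min_norm_unique [StrictConvexSpace ℝ (StrongDual ℝ X)] {a b : StrongDual ℝ X}
    (ha : a ∈ setGrad f A) (hb : b ∈ setGrad f A)
    (hamin : ∀ c ∈ setGrad f A, ‖a‖ ≤ ‖c‖) (hbmin : ∀ c ∈ setGrad f A, ‖b‖ ≤ ‖c‖) : a = b := by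
  have hnorm : ‖a‖ = ‖b‖ := le_antisymm (hamin b hb) (hbmin a ha)
  by_contra hne
  have hmid : (1/2 : ℝ) • a + (1/2 : ℝ) • b ∈ setGrad f A :=
    setGrad_convex ha hb (by norm_num) (by norm_num) (by norm_num)
  have h1 : ‖a‖ ≤ ‖(1/2 : ℝ) • a + (1/2 : ℝ) • b‖ := hamin _ hmid
  have h2 : ‖(1/2 : ℝ) • (a + b)‖ < ‖a‖ := (norm_midpoint_lt_iff hnorm).2 hne
  rw [smul_add] at h2
  linarith

end minexist

lemma isOptimalDescent_iff {f : X → ℝ} {A : Set X} {h : X} :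
    IsOptimalDescent f A h ↔
      ‖h‖ = 1 ∧ (∀ h' : X, ‖h'‖ ≤ 1 → setDeriv f A h ≤ setDeriv f A h') ∧ setDeriv f A h < 0 :=
  Iff.rfl

/-- Theorem 3.4 (uniqueness of optimal descent direction): in a reflexive, strictly convex
space with strictly convex dual there is a unique minimal-norm `ã ∈ ∂f(A)`; if moreover
`0 ∉ ∂f(A)` there is a unique optimal descent direction `h̃`, characterized among unit
vectors by `⟨ã,h̃⟩ = −‖ã‖`. -/
theorem unique_minimal_grad_and_unique_optimal_descent
    [CompleteSpace X] [StrictConvexSpace ℝ X] [StrictConvexSpace ℝ (StrongDual ℝ X)]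
    (hrefl : Function.Surjective (inclusionInDoubleDual ℝ X))
    (A : Set X) (hA : A.Nonempty) (f : X → ℝ)
    (hf : ∃ (L : ℝ≥0) (U : Set X), IsOpen U ∧ A ⊆ U ∧ LipschitzOnWith L f U) :
    (∃! a : StrongDual ℝ X, a ∈ setGrad f A ∧ ∀ b ∈ setGrad f A, ‖a‖ ≤ ‖b‖) ∧
    ((0 : StrongDual ℝ X) ∉ setGrad f A →
      (∃! h : X, IsOptimalDescent f A h) ∧
      ∀ a ∈ setGrad f A, (∀ b ∈ setGrad f A, ‖a‖ ≤ ‖b‖) →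
        ∀ h : X, ‖h‖ = 1 → (IsOptimalDescent f A h ↔ a h = -‖a‖)) := by
  obtain ⟨L, U, hU, hAU, hfL⟩ := hf
  obtain ⟨ta, hta, htamin⟩ := exists_min_norm hU hfL hAU hA
  have hpart1 : ∃! a : StrongDual ℝ X, a ∈ setGrad f A ∧ ∀ b ∈ setGrad f A, ‖a‖ ≤ ‖b‖ :=
    ⟨ta, ⟨hta, htamin⟩, fun b hb => min_norm_unique hb.1 hta hb.2 htamin⟩
  refine ⟨hpart1, fun h0 => ?_⟩
  have hta0 : ta ≠ 0 := fun h => h0 (h ▸ hta)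
  set m := ‖ta‖ with hmdef
  have hm : 0 < m := norm_pos_iff.2 hta0
  obtain ⟨u, hu1, hu2⟩ := exists_norming hrefl hta0
  -- lower bound for setDeriv on the unit ball
  have hlb : ∀ h' : X, ‖h'‖ ≤ 1 → -m ≤ setDeriv f A h' := by
    intro h' hh'
    have h1 : ta h' ≤ setDeriv f A h' := eval_le_setDeriv hU hfL hAU hA hta h'
    have h2 : -(ta h') = ta (-h') := (map_neg ta h').symm
    have h3 : ta (-h') ≤ ‖ta‖ * ‖-h'‖ :=
      (le_abs_self _).trans ((Real.norm_eq_abs _) ▸ ta.le_opNorm (-h'))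
    rw [norm_neg] at h3
    have h4 : ‖ta‖ * ‖h'‖ ≤ m := by
      rw [← hmdef]
      nlinarith [norm_nonneg h']
    linarith
  -- value at -u
  have hval : setDeriv f A (-u) = -m := by
    obtain ⟨astar, hastar, hastar_eq, hastar_max⟩ := exists_max_eval hU hfL hAU hA (-u)
    have h1 : m ≤ astar u := eval_norming_ge hrefl hU hfL hAU hta htamin hta0 hu1 hu2 hastar
    have h2 : setDeriv f A (-u) ≤ -m := by
      rw [← hastar_eq, map_neg]
      linarith
    have h3 : -m ≤ setDeriv f A (-u) := by
      have := eval_le_setDeriv hU hfL hAU hA hta (-u)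
      rw [map_neg, hu2] at this
      linarith
    linarith
  have hopt : IsOptimalDescent f A (-u) := by
    rw [isOptimalDescent_iff]
    refine ⟨by rw [norm_neg, hu1], fun h' hh' => ?_, by rw [hval]; linarith⟩
    rw [hval]
    exact hlb h' hh'
  -- uniqueness of the optimal descent direction
  have huniq : ∀ h : X, IsOptimalDescent f A h → h = -u := by
    intro h hod
    obtain ⟨hh1, hh2, hh3⟩ := isOptimalDescent_iff.1 hod
    have h1 : setDeriv f A h ≤ -m := by
      have := hh2 (-u) (by rw [norm_neg, hu1])
      rwa [hval] at this
    have h2 : ta h ≤ -m := (eval_le_setDeriv hU hfL hAU hA hta h).trans h1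
    have h3 : -m ≤ ta h := by
      have h4 : ta (-h) ≤ ‖ta‖ * ‖-h‖ :=
        (le_abs_self _).trans ((Real.norm_eq_abs _) ▸ ta.le_opNorm (-h))
      rw [norm_neg, hh1, mul_one, map_neg] at h4
      linarith
    have h5 : ta (-h) = ‖ta‖ := by rw [map_neg]; linarith
    have h6 : -h = u := attain_unique hta0 (by rw [norm_neg, hh1]) hu1 h5 hu2
    rw [← h6]
    simp
  refine ⟨⟨-u, hopt, huniq⟩, ?_⟩
  intro a ha hamin h hh1
  have haeq : a = ta := hpart1.unique ⟨ha, hamin⟩ ⟨hta, htamin⟩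
  constructor
  · intro hod
    have := huniq h hod
    rw [this, haeq, map_neg, hu2]
  · intro hval2
    rw [haeq] at hval2
    have h5 : ta (-h) = ‖ta‖ := by rw [map_neg]; linarith [hval2]
    have h6 : -h = u := attain_unique hta0 (by rw [norm_neg, hh1]) hu1 h5 hu2
    have : h = -u := by rw [← h6]; simp
    rw [this]
    exact hopt
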